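/- arXiv:1602.02166 — 2 statements merged into one kernel-verified Lean document; each statement's English description precedes it below -/
import Mathlib

section
/- Let G be an r×r complex Hermitian positive semidefinite matrix of rank p, and let ℋ be an r×r complex matrix with Gℋ = ℋ†G. Let S be a p×r complex matrix with S·G·S† = I_p (the p×p identity), and set 𝐇 = S·G·ℋ·S†. Then 𝐇 is a Hermitian p×p matrix, and every eigenvalue of 𝐇 is an eigenvalue of ℋ. -/
open Matrix
open scoped ComplexOrder

/-- Let `G` be an `r×r` Hermitian positive semidefinite matrix of rank `p`, let `ℋ`
satisfy `Gℋ = ℋ†G`, and let `S` be a `p×r` matrix with `S G S† = I`.  Then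
`𝐇 = S G ℋ S†` is Hermitian, and every eigenvalue of `𝐇` is an eigenvalue of `ℋ`. -/
theorem hamiltonian_matrix_hermitian_and_eigenvalues {r p : ℕ}
    (G H : Matrix (Fin r) (Fin r) ℂ)
    (hG : G.PosSemidef) (hrank : G.rank = p) (hGH : G * H = Hᴴ * G)
    (S : Matrix (Fin p) (Fin r) ℂ) (hS : S * G * Sᴴ = 1)
    (Hbf : Matrix (Fin p) (Fin p) ℂ) (hHbf : Hbf = S * G * H * Sᴴ) :
    Hbf.IsHermitian
    ∧ ∀ E : ℂ, (∃ W : Fin p → ℂ, W ≠ 0 ∧ Hbf.mulVec W = E • W) →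
        ∃ V : Fin r → ℂ, V ≠ 0 ∧ H.mulVec V = E • V := by
  classical
  have hGherm : Gᴴ = G := hG.1
  -- Hermiticity of Hbf
  have hherm : Hbf.IsHermitian := by
    unfold Matrix.IsHermitian
    rw [hHbf]
    calc (S * G * H * Sᴴ)ᴴ = S * (Hᴴ * (Gᴴ * Sᴴ)) := by
          simp [Matrix.conjTranspose_mul, Matrix.mul_assoc]
      _ = S * G * H * Sᴴ := by
          rw [hGherm, ← Matrix.mul_assoc Hᴴ G Sᴴ, ← hGH]
          simp [Matrix.mul_assoc]
  -- square root of G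
  open scoped MatrixOrder in
  set K := CFC.sqrt G with hKdef
  have hKps : K.PosSemidef := by
    open scoped MatrixOrder in exact (CFC.sqrt_nonneg G).posSemidef
  have hKherm : Kᴴ = K := hKps.1
  have hKK : K * K = G := by
    open scoped MatrixOrder in exact CFC.sqrt_mul_sqrt_self G hG.nonneg
  have hKrank : K.rank = p := by
    have : (Kᴴ * K).rank = K.rank := Matrix.rank_conjTranspose_mul_self K
    rw [hKherm, hKK, hrank] at this
    exact this.symm
  set A := S * K with hAdef
  have hAAH : A * Aᴴ = 1 := by
    have : A * Aᴴ = S * (K * K) * Sᴴ := by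
      rw [hAdef, Matrix.conjTranspose_mul, hKherm]
      simp [Matrix.mul_assoc]
    rw [this, hKK, hS]
  have hPAH : Aᴴ * A * Aᴴ = Aᴴ := by
    rw [Matrix.mul_assoc, hAAH, Matrix.mul_one]
  -- range equality
  have hle : LinearMap.range (Aᴴ.mulVecLin) ≤ LinearMap.range (K.mulVecLin) := by
    have : Aᴴ = K * Sᴴ := by rw [hAdef, Matrix.conjTranspose_mul, hKherm]
    rw [this, Matrix.mulVecLin_mul]
    exact LinearMap.range_comp_le_range _ _
  have hArank : Aᴴ.rank = p := by
    rw [Matrix.rank_conjTranspose]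
    have : (A * Aᴴ).rank = A.rank := Matrix.rank_self_mul_conjTranspose A
    rw [hAAH, Matrix.rank_one, Fintype.card_fin] at this
    exact this.symm
  have hrangeeq : LinearMap.range (Aᴴ.mulVecLin) = LinearMap.range (K.mulVecLin) := by
    apply Submodule.eq_of_le_of_finrank_le hle
    show Module.finrank ℂ _ ≤ Module.finrank ℂ _
    rw [show Module.finrank ℂ (LinearMap.range K.mulVecLin) = K.rank from rfl,
      show Module.finrank ℂ (LinearMap.range Aᴴ.mulVecLin) = Aᴴ.rank from rfl,
      hKrank, hArank]
  -- P * K = K where P = Aᴴ * A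
  have hPK : Aᴴ * A * K = K := by
    have hv : ∀ v : Fin r → ℂ, (Aᴴ * A * K) *ᵥ v = K *ᵥ v := by
      intro v
      have hmem : K *ᵥ v ∈ LinearMap.range (Aᴴ.mulVecLin) := by
        rw [hrangeeq]; exact ⟨v, rfl⟩
      obtain ⟨u, hu⟩ := hmem
      have hu' : Aᴴ *ᵥ u = K *ᵥ v := hu
      calc (Aᴴ * A * K) *ᵥ v = (Aᴴ * A) *ᵥ (K *ᵥ v) := by rw [← Matrix.mulVec_mulVec]
        _ = (Aᴴ * A) *ᵥ (Aᴴ *ᵥ u) := by rw [hu']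
        _ = (Aᴴ * A * Aᴴ) *ᵥ u := by rw [Matrix.mulVec_mulVec]
        _ = Aᴴ *ᵥ u := by rw [hPAH]
        _ = K *ᵥ v := hu'
    ext i j
    have := congrFun (hv (Pi.single j 1)) i
    simpa [Matrix.mulVec_single] using this
  have hKey : G * Sᴴ * S * G = G := by
    have h1 : Aᴴ * A = K * Sᴴ * S * K := by
      rw [hAdef, Matrix.conjTranspose_mul, hKherm]; simp [Matrix.mul_assoc]
    have h2 : K * (Aᴴ * A * K) = K * K := by rw [hPK]
    rw [h1] at h2
    calc G * Sᴴ * S * G = K * (K * Sᴴ * S * K * K) := by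
          rw [← hKK]; simp [Matrix.mul_assoc]
      _ = K * K := h2
      _ = G := hKK
  refine ⟨hherm, ?_⟩
  rintro E ⟨W, hW0, hW⟩
  -- E is real
  have hc0 : star W ⬝ᵥ W ≠ 0 := fun h => hW0 (dotProduct_star_self_eq_zero.mp h)
  have hEreal : star E = E := by
    have h1 : star W ⬝ᵥ (Hbf *ᵥ W) = E * (star W ⬝ᵥ W) := by
      rw [hW]; simp [dotProduct_smul, smul_eq_mul]
    have h2 : star (star W ⬝ᵥ (Hbf *ᵥ W)) = star W ⬝ᵥ (Hbf *ᵥ W) := by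
      rw [← Matrix.star_dotProduct]
      rw [Matrix.star_mulVec, hherm.eq]
      rw [Matrix.dotProduct_mulVec]
    have hcreal : star (star W ⬝ᵥ W) = star W ⬝ᵥ W := by
      rw [← Matrix.star_dotProduct]
    rw [h1, star_mul', hcreal] at h2
    exact mul_right_cancel₀ hc0 h2
  -- main argument
  by_contra hcon
  push_neg at hcon
  have hdet : (H - E • 1).det ≠ 0 := by
    intro hd
    obtain ⟨V, hV0, hV⟩ := (Matrix.exists_mulVec_eq_zero_iff).mpr hd
    refine hcon V hV0 ?_ |>.elim
    have := hV
    rw [Matrix.sub_mulVec, sub_eq_zero] at this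
    rw [this, Matrix.smul_mulVec, Matrix.one_mulVec]
  have hdetH : (Hᴴ - E • 1).det ≠ 0 := by
    have : Hᴴ - E • 1 = (H - E • 1)ᴴ := by
      rw [Matrix.conjTranspose_sub, Matrix.conjTranspose_smul, Matrix.conjTranspose_one, hEreal]
    rw [this, Matrix.det_conjTranspose]
    simpa using fun h => hdet (by simpa using congrArg star h)
  set x := Sᴴ *ᵥ W with hxdef
  have hGx0 : G *ᵥ x ≠ 0 := by
    intro h
    apply hW0
    have : (S * G * Sᴴ) *ᵥ W = S *ᵥ (G *ᵥ x) := by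
      rw [hxdef]; simp [Matrix.mulVec_mulVec, Matrix.mul_assoc]
    rw [hS, h, Matrix.one_mulVec, Matrix.mulVec_zero] at this
    exact this
  -- G * H * Sᴴ = G * Sᴴ * Hbf
  have hM1 : G * H * Sᴴ = G * Sᴴ * Hbf := by
    rw [hHbf]
    calc G * H * Sᴴ = (G * Sᴴ * S * G) * H * Sᴴ := by rw [hKey]
      _ = G * Sᴴ * (S * G * H * Sᴴ) := by simp [Matrix.mul_assoc]
  have hGHx : G *ᵥ (H *ᵥ x) = E • (G *ᵥ x) := by
    calc G *ᵥ (H *ᵥ x) = (G * H * Sᴴ) *ᵥ W := by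
          rw [hxdef]; simp [Matrix.mulVec_mulVec, Matrix.mul_assoc]
      _ = (G * Sᴴ) *ᵥ (Hbf *ᵥ W) := by rw [hM1, ← Matrix.mulVec_mulVec]
      _ = (G * Sᴴ) *ᵥ (E • W) := by rw [hW]
      _ = E • ((G * Sᴴ) *ᵥ W) := by rw [Matrix.mulVec_smul]
      _ = E • (G *ᵥ x) := by rw [hxdef, Matrix.mulVec_mulVec]
  -- (Hᴴ - E•1) *ᵥ (G *ᵥ x) = 0
  have hfinal : (Hᴴ - E • 1) *ᵥ (G *ᵥ x) = 0 := by
    have hcomm : (Hᴴ - E • 1) * G = G * (H - E • 1) := by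
      rw [Matrix.sub_mul, Matrix.mul_sub, ← hGH, Matrix.smul_mul, Matrix.mul_smul,
        Matrix.one_mul, Matrix.mul_one]
    have h3 : (H - E • 1) *ᵥ x = H *ᵥ x - E • x := by
      rw [Matrix.sub_mulVec, Matrix.smul_mulVec, Matrix.one_mulVec]
    rw [Matrix.mulVec_mulVec, hcomm, ← Matrix.mulVec_mulVec, h3,
      Matrix.mulVec_sub, hGHx, Matrix.mulVec_smul, sub_self]
  exact hdetH ((Matrix.exists_mulVec_eq_zero_iff).mp ⟨G *ᵥ x, hGx0, hfinal⟩)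
end

section
/- Let G be an r×r complex Hermitian positive semidefinite matrix of rank p, and let ℋ be an r×r complex matrix with Gℋ = ℋ†G. Let S be a p×r complex matrix with S·G·S† = I_p, and set 𝐇 = S·G·ℋ·S†. If ℋV = E·V for some vector V in ℂʳ with V†GV > 0, then E is real and E is an eigenvalue of the p×p matrix 𝐇. (Thus an eigenstate of ℋ with positive norm is a physical energy state.) -/
open Matrix
open scoped ComplexOrder

/-- Let `G` be an `r×r` Hermitian positive semidefinite matrix of rank `p`, let `ℋ`
satisfy `Gℋ = ℋ†G`, let `S` be a `p×r` matrix with `S G S† = I`, and set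
`𝐇 = S G ℋ S†`.  If `ℋ V = E V` for a vector `V` with `V† G V > 0`, then `E` is real
and `E` is an eigenvalue of `𝐇`. -/
theorem positive_norm_eigenstate_is_physical {r p : ℕ}
    (G H : Matrix (Fin r) (Fin r) ℂ)
    (hG : G.PosSemidef) (hrank : G.rank = p) (hGH : G * H = Hᴴ * G)
    (S : Matrix (Fin p) (Fin r) ℂ) (hS : S * G * Sᴴ = 1)
    (Hbf : Matrix (Fin p) (Fin p) ℂ) (hHbf : Hbf = S * G * H * Sᴴ)
    (V : Fin r → ℂ) (E : ℂ)
    (heig : H.mulVec V = E • V)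
    (hpos : 0 < star V ⬝ᵥ G.mulVec V) :
    (∃ t : ℝ, E = (t : ℂ)) ∧ ∃ W : Fin p → ℂ, W ≠ 0 ∧ Hbf.mulVec W = E • W := by
  open scoped MatrixOrder in
  set A := CFC.sqrt G with hAdef
  open scoped MatrixOrder in
  have hA : A * A = G := CFC.sqrt_mul_sqrt_self G hG.nonneg
  open scoped MatrixOrder in
  have hAH : Aᴴ = A := (CFC.sqrt_nonneg G).posSemidef.1
  set M := A * Sᴴ with hMdef
  have hMH : Mᴴ = S * A := by rw [hMdef, conjTranspose_mul, conjTranspose_conjTranspose, hAH]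
  have hMM : Mᴴ * M = 1 := by
    rw [hMH, hMdef, ← hS, ← hA]; simp only [Matrix.mul_assoc]
  -- rank facts
  have hrankA : A.rank = p := by
    have h := rank_conjTranspose_mul_self A
    rw [hAH, hA] at h
    rw [← h]; exact hrank
  have hrankM : M.rank = p := by
    have h1 : (Mᴴ * M).rank = M.rank := rank_conjTranspose_mul_self M
    rw [hMM] at h1
    simpa using h1.symm
  -- range equality
  have hle : LinearMap.range M.mulVecLin ≤ LinearMap.range A.mulVecLin := by
    rw [hMdef, mulVecLin_mul]
    exact LinearMap.range_comp_le_range _ _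
  have hrange : LinearMap.range M.mulVecLin = LinearMap.range A.mulVecLin := by
    apply Submodule.eq_of_le_of_finrank_le hle
    show A.rank ≤ M.rank
    rw [hrankA, hrankM]
  -- projection fact
  have hproj : M * Mᴴ * A = A := by
    have hvec : ∀ x : Fin r → ℂ, (M * Mᴴ * A).mulVec x = A.mulVec x := by
      intro x
      have hx : A.mulVec x ∈ LinearMap.range M.mulVecLin := by
        rw [hrange]; exact ⟨x, rfl⟩
      obtain ⟨y, hy⟩ := hx
      have hy' : M.mulVec y = A.mulVec x := hy
      rw [← Matrix.mulVec_mulVec, ← Matrix.mulVec_mulVec, ← hy',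
        Matrix.mulVec_mulVec, Matrix.mulVec_mulVec, Matrix.mul_assoc, hMM, Matrix.mul_one]
    ext i j
    have := congrFun (hvec (Pi.single j 1)) i
    simpa [Matrix.mulVec_single] using this
  have key : G * Sᴴ * S * G = G := by
    have h1 : A * (M * Mᴴ * A) = G := by rw [hproj, hA]
    calc G * Sᴴ * S * G = A * (M * Mᴴ * A) := by
          rw [hMdef, hMH, ← hA]; simp only [Matrix.mul_assoc]
      _ = G := h1
  have key' : G * (Sᴴ * (S * G)) = G := by
    have h2 : G * (Sᴴ * (S * G)) = G * Sᴴ * S * G := by simp only [Matrix.mul_assoc]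
    rw [h2, key]
  -- E is real
  set c := star V ⬝ᵥ G.mulVec V with hc
  have hcne : c ≠ 0 := ne_of_gt hpos
  have h1 : star V ⬝ᵥ (G * H).mulVec V = E * c := by
    rw [← Matrix.mulVec_mulVec, heig, Matrix.mulVec_smul, dotProduct_smul]
    rfl
  have h2 : star V ⬝ᵥ (Hᴴ * G).mulVec V = star E * c := by
    rw [← Matrix.mulVec_mulVec, Matrix.dotProduct_mulVec, ← Matrix.star_mulVec, heig]
    rw [star_smul, smul_dotProduct]
    rfl
  have hE : star E = E := by
    have h4 : E * c = star E * c := by rw [← h1, ← h2, hGH]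
    exact (mul_right_cancel₀ hcne h4.symm)
  have hreal : ∃ t : ℝ, E = (t : ℂ) := Complex.conj_eq_iff_real.mp hE
  -- the eigenvector
  set W : Fin p → ℂ := (S * G).mulVec V with hW
  have hWnorm : star W ⬝ᵥ W = c := by
    rw [hW, star_mulVec, ← Matrix.dotProduct_mulVec, Matrix.mulVec_mulVec,
      conjTranspose_mul, hG.1, Matrix.mul_assoc, key']
  have hWne : W ≠ 0 := by
    intro h0
    rw [h0] at hWnorm
    simp at hWnorm
    exact hcne hWnorm.symm
  refine ⟨hreal, W, hWne, ?_⟩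
  have h3 : G * H * (Sᴴ * (S * G)) = G * H := by
    rw [hGH, Matrix.mul_assoc, key']
  have hmat : S * G * H * Sᴴ * (S * G) = S * (G * H) := by
    calc S * G * H * Sᴴ * (S * G) = S * (G * H * (Sᴴ * (S * G))) := by
          simp only [Matrix.mul_assoc]
      _ = S * (G * H) := by rw [h3]
  rw [hHbf, hW, Matrix.mulVec_mulVec, hmat, ← Matrix.mulVec_mulVec,
    ← Matrix.mulVec_mulVec, heig, Matrix.mulVec_smul, Matrix.mulVec_smul,
    Matrix.mulVec_mulVec]
end
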